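/- Let c ≥ 2 and 1 ≤ k ≤ c/β for a constant β ≥ 2. Consider the (c,k)-bipartite hitting game: a referee privately selects a matching M of size k in the complete bipartite graph K_{c,c}; in each round the player proposes one edge and wins upon proposing an edge of M. Any (possibly randomized) player strategy that wins within f(c,k) rounds with probability at least 1/2 must satisfy f(c,k) ≥ c²/(α·k), where α = 2·(β/(β-1))². -/

import Mathlib

/-- A set of edges of the complete bipartite graph `K_{c,c}` (edges are pairs in
`Fin c × Fin c`) is a matching if no two distinct edges share an endpoint. -/
def IsBipartiteMatching (c : ℕ) (s : Finset (Fin c × Fin c)) : Prop :=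
  ∀ e ∈ s, ∀ e' ∈ s, e ≠ e' → e.1 ≠ e'.1 ∧ e.2 ≠ e'.2

open Finset MeasureTheory

noncomputable def MSet (c k : ℕ) : Finset (Finset (Fin c × Fin c)) :=
  @Finset.filter _ (fun s => s.card = k ∧ IsBipartiteMatching c s) (Classical.decPred _) univ

lemma matching_map {c : ℕ} (g h : Fin c ≃ Fin c) (s : Finset (Fin c × Fin c))
    (hs : IsBipartiteMatching c s) :
    IsBipartiteMatching c (s.map (g.prodCongr h).toEmbedding) := by
  intro e he e' he' hne
  simp only [mem_map, Equiv.coe_toEmbedding] at he he'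
  obtain ⟨a, ha, rfl⟩ := he
  obtain ⟨b, hb, rfl⟩ := he'
  have hab : a ≠ b := fun h' => hne (by rw [h'])
  obtain ⟨h1, h2⟩ := hs a ha b hb hab
  constructor
  · simpa using fun hh => h1 (g.injective hh)
  · simpa using fun hh => h2 (h.injective hh)

lemma cnt_mono {c k : ℕ} (e e' : Fin c × Fin c) :
    ((MSet c k).filter (fun s => e ∈ s)).card ≤ ((MSet c k).filter (fun s => e' ∈ s)).card := by
  classical
  set emb := ((Equiv.swap e.1 e'.1).prodCongr (Equiv.swap e.2 e'.2)).toEmbedding with hemb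
  apply Finset.card_le_card_of_injOn (fun s => s.map emb)
  · intro s hs
    simp only [Finset.mem_coe, mem_filter, MSet, Finset.mem_filter, mem_univ, true_and] at hs ⊢
    obtain ⟨⟨hcard, hmatch⟩, hes⟩ := hs
    refine ⟨⟨by simp [hcard], matching_map _ _ s hmatch⟩, ?_⟩
    have : emb e = e' := by
      exact Prod.ext (Equiv.swap_apply_left _ _) (Equiv.swap_apply_left _ _)
    rw [← this]
    exact mem_map_of_mem emb hes
  · intro a _ b _ hab
    exact Finset.map_injective emb hab

lemma cnt_const {c k : ℕ} (e e' : Fin c × Fin c) :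
    ((MSet c k).filter (fun s => e ∈ s)).card = ((MSet c k).filter (fun s => e' ∈ s)).card :=
  le_antisymm (cnt_mono e e') (cnt_mono e' e)

lemma sum_cnt {c k : ℕ} :
    ∑ e : Fin c × Fin c, ((MSet c k).filter (fun s => e ∈ s)).card = k * (MSet c k).card := by
  classical
  have : ∀ e : Fin c × Fin c, ((MSet c k).filter (fun s => e ∈ s)).card
      = ∑ s ∈ MSet c k, if e ∈ s then 1 else 0 := fun e => by
    rw [Finset.card_filter]
  simp_rw [this]
  rw [Finset.sum_comm]
  have : ∀ s ∈ MSet c k, (∑ e : Fin c × Fin c, if e ∈ s then 1 else 0) = k := by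
    intro s hs
    simp only [MSet, Finset.mem_filter] at hs
    rw [Finset.sum_ite_mem, Finset.univ_inter, Finset.sum_const, smul_eq_mul, mul_one, hs.2.1]
  rw [Finset.sum_congr rfl this, Finset.sum_const, smul_eq_mul, mul_comm]

lemma MSet_nonempty {c k : ℕ} (hkc : k ≤ c) : 0 < (MSet c k).card := by
  classical
  rw [Finset.card_pos]
  refine ⟨(univ : Finset (Fin k)).map ⟨fun i => (Fin.castLE hkc i, Fin.castLE hkc i), ?_⟩, ?_⟩
  · intro a b hab
    exact Fin.castLE_injective hkc (congrArg Prod.fst hab)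
  · simp only [MSet, Finset.mem_filter, mem_univ, true_and]
    constructor
    · simp
    · intro e he e' he' hne
      simp only [mem_map, Function.Embedding.coeFn_mk] at he he'
      obtain ⟨a, _, rfl⟩ := he
      obtain ⟨b, _, rfl⟩ := he'
      have : a ≠ b := fun h' => hne (by rw [h'])
      have := fun hh => this (Fin.castLE_injective hkc hh)
      exact ⟨this, this⟩

lemma sum_point_le_one {c : ℕ} (μ : Measure (ℕ → Fin c × Fin c)) [IsProbabilityMeasure μ]
    (r : ℕ) : ∑ e : Fin c × Fin c, μ {σ | σ r = e} ≤ 1 := by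
  have hmeas : ∀ e : Fin c × Fin c, MeasurableSet {σ : ℕ → Fin c × Fin c | σ r = e} := by
    intro e
    have : {σ : ℕ → Fin c × Fin c | σ r = e} = (fun σ => σ r) ⁻¹' {e} := rfl
    rw [this]
    exact (measurable_pi_apply r) (MeasurableSet.singleton e)
  have hdisj : Set.PairwiseDisjoint (↑(univ : Finset (Fin c × Fin c)))
      (fun e => {σ : ℕ → Fin c × Fin c | σ r = e}) := by
    intro a _ b _ hab
    simp only [Function.onFun, Set.disjoint_left]
    intro σ ha hb
    exact hab (ha ▸ hb ▸ rfl)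
  rw [← measure_biUnion_finset hdisj (fun e _ => hmeas e)]
  exact prob_le_one

lemma union_bound {c f : ℕ} (μ : Measure (ℕ → Fin c × Fin c))
    (s : Finset (Fin c × Fin c)) :
    μ {σ | ∃ r < f, σ r ∈ s} ≤ ∑ r ∈ Finset.range f, ∑ e ∈ s, μ {σ | σ r = e} := by
  have hsub : {σ : ℕ → Fin c × Fin c | ∃ r < f, σ r ∈ s}
      ⊆ ⋃ r ∈ Finset.range f, ⋃ e ∈ s, {σ | σ r = e} := by
    intro σ ⟨r, hr, hrs⟩
    exact Set.mem_biUnion (Finset.mem_range.2 hr) (Set.mem_biUnion hrs rfl)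
  refine (measure_mono hsub).trans ?_
  refine (measure_biUnion_finset_le _ _).trans ?_
  exact Finset.sum_le_sum fun r _ => measure_biUnion_finset_le _ _

set_option maxHeartbeats 1000000 in
/-- Lower bound for the `(c,k)`-bipartite hitting game: a (possibly randomized) player,
modeled as a probability distribution over infinite sequences of proposed edges, that for
every matching `M` of size `k` wins within `f` rounds (i.e. proposes an edge of `M` in some
round `r < f`) with probability at least `1/2`, must satisfy
`f ≥ c²/(α·k)` where `α = 2·(β/(β-1))²`, for `2 ≤ c`, `1 ≤ k ≤ c/β`, `β ≥ 2`. -/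
theorem stmt_7 (c k : ℕ) (β : ℝ) (hc : 2 ≤ c) (hk : 1 ≤ k) (hβ : 2 ≤ β)
    (hkc : (k : ℝ) ≤ c / β) (f : ℕ) (strategy : PMF (ℕ → Fin c × Fin c))
    (hwin : ∀ s : Finset (Fin c × Fin c), s.card = k → IsBipartiteMatching c s →
      1 / 2 ≤ strategy.toMeasure {σ | ∃ r < f, σ r ∈ s}) :
    (c : ℝ) ^ 2 / (2 * (β / (β - 1)) ^ 2 * k) ≤ f := by
  classical
  have hβ0 : (0:ℝ) < β := by linarith
  have hkc' : k ≤ c := by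
    have : (k:ℝ) ≤ c := hkc.trans (div_le_self (by positivity) (by linarith))
    exact_mod_cast this
  set μ := strategy.toMeasure with hμ
  set p : ℕ → Fin c × Fin c → ENNReal := fun r e => μ {σ | σ r = e} with hp
  set N := (MSet c k).card with hN
  have e0 : Fin c × Fin c := (⟨0, by omega⟩, ⟨0, by omega⟩)
  set cnt : Fin c × Fin c → ℕ := fun e => ((MSet c k).filter (fun s => e ∈ s)).card with hcnt
  have hNpos : 0 < N := MSet_nonempty hkc'
  have cntc : ∀ e : Fin c × Fin c, cnt e = cnt e0 := fun e => cnt_const e e0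
  have hccnt : (c * c) * cnt e0 = k * N := by
    calc (c * c) * cnt e0 = ∑ _e : Fin c × Fin c, cnt e0 := by
          simp [Finset.sum_const, Finset.card_univ, mul_assoc]
      _ = ∑ e : Fin c × Fin c, cnt e := Finset.sum_congr rfl fun e _ => (cntc e).symm
      _ = k * N := sum_cnt
  -- main chain in ENNReal
  have hchain : (N : ENNReal) * (1/2) ≤ (f : ENNReal) * cnt e0 := by
    calc (N : ENNReal) * (1/2) = ∑ _s ∈ MSet c k, (1/2 : ENNReal) := by
          rw [Finset.sum_const, nsmul_eq_mul]
      _ ≤ ∑ s ∈ MSet c k, ∑ r ∈ Finset.range f, ∑ e ∈ s, p r e := by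
          refine Finset.sum_le_sum fun s hs => ?_
          simp only [MSet, Finset.mem_filter] at hs
          exact (hwin s hs.2.1 hs.2.2).trans (union_bound μ s)
      _ = ∑ r ∈ Finset.range f, ∑ s ∈ MSet c k, ∑ e ∈ s, p r e := Finset.sum_comm
      _ = ∑ r ∈ Finset.range f, ∑ e : Fin c × Fin c, (cnt e : ENNReal) * p r e := by
          refine Finset.sum_congr rfl fun r _ => ?_
          have h1 : ∀ s ∈ MSet c k, ∑ e ∈ s, p r e
              = ∑ e : Fin c × Fin c, if e ∈ s then p r e else 0 := by
            intro s _
            rw [Finset.sum_ite_mem, Finset.univ_inter]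
          rw [Finset.sum_congr rfl h1, Finset.sum_comm]
          refine Finset.sum_congr rfl fun e _ => ?_
          rw [← Finset.sum_filter, Finset.sum_const, nsmul_eq_mul]
      _ ≤ ∑ _r ∈ Finset.range f, (cnt e0 : ENNReal) := by
          refine Finset.sum_le_sum fun r _ => ?_
          calc ∑ e : Fin c × Fin c, (cnt e : ENNReal) * p r e
              = (cnt e0 : ENNReal) * ∑ e : Fin c × Fin c, p r e := by
                rw [Finset.mul_sum]
                exact Finset.sum_congr rfl fun e _ => by rw [cntc e]
            _ ≤ (cnt e0 : ENNReal) * 1 := mul_le_mul_right (sum_point_le_one μ r) _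
            _ = (cnt e0 : ENNReal) := mul_one _
      _ = (f : ENNReal) * cnt e0 := by rw [Finset.sum_const, Finset.card_range, nsmul_eq_mul]
  -- to naturals
  have hnat : N ≤ 2 * (f * cnt e0) := by
    have htwo : (1/2 : ENNReal) * 2 = 1 := by
      rw [one_div, ENNReal.inv_mul_cancel two_ne_zero ENNReal.ofNat_ne_top]
    have h2 : (N : ENNReal) ≤ ((f : ENNReal) * cnt e0) * 2 := by
      calc (N : ENNReal) = (N : ENNReal) * (1/2) * 2 := by rw [mul_assoc, htwo, mul_one]
        _ ≤ ((f : ENNReal) * cnt e0) * 2 := mul_le_mul_left hchain 2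
    have h3 : ((N : ℕ) : ENNReal) ≤ ((2 * (f * cnt e0) : ℕ) : ENNReal) := by
      push_cast
      calc (N : ENNReal) ≤ ((f : ENNReal) * cnt e0) * 2 := h2
        _ = 2 * ((f : ENNReal) * cnt e0) := by ring
    exact_mod_cast h3
  have hkey : c * c ≤ 2 * f * k := by
    have h3 : (c * c) * N ≤ (2 * f * k) * N := by
      calc (c * c) * N ≤ (c * c) * (2 * (f * cnt e0)) := Nat.mul_le_mul_left _ hnat
        _ = 2 * f * ((c * c) * cnt e0) := by ring
        _ = 2 * f * (k * N) := by rw [hccnt]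
        _ = (2 * f * k) * N := by ring
    exact Nat.le_of_mul_le_mul_right h3 hNpos
  -- final real arithmetic
  have hkeyR : (c : ℝ) ^ 2 ≤ 2 * f * k := by
    have h4 := (Nat.cast_le (α := ℝ)).2 hkey
    push_cast at h4
    rw [sq]
    linarith
  have hb1 : (1:ℝ) ≤ (β / (β - 1)) ^ 2 := by
    have h1 : (0:ℝ) < β - 1 := by linarith
    have h2 : (1:ℝ) ≤ β / (β - 1) := (one_le_div h1).2 (by linarith)
    calc (1:ℝ) = 1 * 1 := by ring
      _ ≤ (β / (β - 1)) * (β / (β - 1)) :=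
          mul_le_mul h2 h2 zero_le_one (le_trans zero_le_one h2)
      _ = (β / (β - 1)) ^ 2 := (sq _).symm
  have hk0 : (0:ℝ) < k := by exact_mod_cast hk
  have hden : (0:ℝ) < 2 * (β / (β - 1)) ^ 2 * k := by positivity
  rw [div_le_iff₀ hden]
  have hf0 : (0:ℝ) ≤ f := Nat.cast_nonneg f
  calc (c : ℝ) ^ 2 ≤ 2 * f * k := hkeyR
    _ = (f : ℝ) * (2 * 1 * k) := by ring
    _ ≤ (f : ℝ) * (2 * (β / (β - 1)) ^ 2 * k) := by
        apply mul_le_mul_of_nonneg_left _ hf0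
        apply mul_le_mul_of_nonneg_right _ hk0.le
        linarith [hb1]
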